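/- Let A be a disconnected zero-sum arrowflow on a tree T, and let {i,j} be an edge of T carrying no arc of A. Then the map φ_A sending a catalyst (σ, f) in the arrowflow class C(A) to (σ∘(i j), f∘(i j)) is a well-defined sign-reversing involution on C(A) without fixed points; consequently Σ_{κ ∈ C(A)} sign(κ) = 0. -/

import Mathlib

open scoped Classical

/-- `IsStep G k m a b` : the arc `(a, b)` is a step of the unique path from `k` to `m`. -/
def IsStep {V : Type*} (G : SimpleGraph V) (k m a b : V) : Prop :=
  ∃ p : G.Walk k m, p.IsPath ∧ ∃ d ∈ p.darts, d.toProd = (a, b)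

/-- A catalyst for `G` : a pair `(σ, f)` such that `f k` is a step of the path from
`k` to `σ k` for every vertex `k`. -/
def IsCatalyst {n : ℕ} (G : SimpleGraph (Fin n))
    (κ : Equiv.Perm (Fin n) × (Fin n → Fin n × Fin n)) : Prop :=
  ∀ k, IsStep G k (κ.1 k) (κ.2 k).1 (κ.2 k).2

/-- The arrowflow induced by `f` : the multiset of the values of `f`. -/
def flowOf {n : ℕ} (f : Fin n → Fin n × Fin n) : Multiset (Fin n × Fin n) :=
  Multiset.map f Finset.univ.val

/-- The arrowflow class of `A` : the set of catalysts inducing arrowflow `A`. -/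
def classOf {n : ℕ} (G : SimpleGraph (Fin n)) (A : Multiset (Fin n × Fin n)) :
    Set (Equiv.Perm (Fin n) × (Fin n → Fin n × Fin n)) :=
  {κ | IsCatalyst G κ ∧ flowOf κ.2 = A}

set_option maxHeartbeats 800000

lemma step_extend {n : ℕ} {G : SimpleGraph (Fin n)} (hG : G.IsTree)
    {i j m a b : Fin n} (hij : G.Adj i j) (hne : s(a,b) ≠ s(i,j))
    (h : IsStep G j m a b) : IsStep G i m a b := by
  obtain ⟨p, hp, d, hd, hdp⟩ := h
  by_cases hi : i ∈ p.support
  · refine ⟨p.dropUntil i hi, hp.dropUntil hi, ?_⟩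
    have hdarts : p.darts = (p.takeUntil i hi).darts ++ (p.dropUntil i hi).darts := by
      conv_lhs => rw [← p.take_spec hi]
      exact SimpleGraph.Walk.darts_append _ _
    rw [hdarts] at hd
    rcases List.mem_append.mp hd with hd1 | hd2
    · exfalso
      have htp : (p.takeUntil i hi).IsPath := hp.takeUntil hi
      have h2 : (SimpleGraph.Walk.cons hij.symm SimpleGraph.Walk.nil : G.Walk j i).IsPath := by
        simp [hij.ne']
      have huniq := hG.IsAcyclic.path_unique ⟨p.takeUntil i hi, htp⟩
        ⟨SimpleGraph.Walk.cons hij.symm SimpleGraph.Walk.nil, h2⟩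
      have hw : p.takeUntil i hi = SimpleGraph.Walk.cons hij.symm SimpleGraph.Walk.nil :=
        congrArg Subtype.val huniq
      rw [hw] at hd1
      simp only [SimpleGraph.Walk.darts_cons, SimpleGraph.Walk.darts_nil,
        List.mem_singleton] at hd1
      apply hne
      have hab : (j, i) = (a, b) := by rw [← hdp, hd1]
      obtain ⟨rfl, rfl⟩ := Prod.mk.inj hab
      exact Sym2.eq_swap
    · exact ⟨d, hd2, hdp⟩
  · exact ⟨SimpleGraph.Walk.cons hij p, hp.cons hi, d, by simp [hd], hdp⟩

lemma flowOf_comp {n : ℕ} (f : Fin n → Fin n × Fin n) (e : Equiv.Perm (Fin n)) :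
    flowOf (f ∘ e) = flowOf f := by
  unfold flowOf
  rw [← Multiset.map_map]
  congr 1
  calc Multiset.map e Finset.univ.val = (Finset.univ.map e.toEmbedding).val := rfl
    _ = Finset.univ.val := by rw [Finset.map_univ_equiv]

/-- For a disconnected zero-sum arrowflow `A` (some edge `{i,j}` of the tree carries no
arc of `A`), the map `(σ, f) ↦ (σ∘(i j), f∘(i j))` is a well-defined sign-reversing
involution of `C(A)` without fixed points; consequently the signed sum over `C(A)`
vanishes. -/
theorem disconnected_zero_sum_involution {n : ℕ}
    (G : SimpleGraph (Fin n)) (hG : G.IsTree)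
    (A : Multiset (Fin n × Fin n))
    (hcard : Multiset.card A = n)
    (harc : ∀ a ∈ A, G.Adj a.1 a.2)
    (i j : Fin n) (hij : G.Adj i j)
    (hmiss : ∀ a ∈ A, s(a.1, a.2) ≠ s(i, j)) :
    (∀ κ ∈ classOf G A,
        (κ.1 * Equiv.swap i j, κ.2 ∘ Equiv.swap i j) ∈ classOf G A) ∧
    (∀ κ : Equiv.Perm (Fin n) × (Fin n → Fin n × Fin n),
        ((κ.1 * Equiv.swap i j) * Equiv.swap i j,
          (κ.2 ∘ Equiv.swap i j) ∘ Equiv.swap i j) = κ) ∧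
    (∀ κ : Equiv.Perm (Fin n) × (Fin n → Fin n × Fin n),
        Equiv.Perm.sign (κ.1 * Equiv.swap i j) = - Equiv.Perm.sign κ.1) ∧
    (∀ κ ∈ classOf G A, (κ.1 * Equiv.swap i j, κ.2 ∘ Equiv.swap i j) ≠ κ) ∧
    ∑ κ : {κ // κ ∈ classOf G A}, (Equiv.Perm.sign κ.1.1 : ℤ) = 0 := by
  have hwd : ∀ κ ∈ classOf G A,
      (κ.1 * Equiv.swap i j, κ.2 ∘ Equiv.swap i j) ∈ classOf G A := by
    rintro ⟨σ, f⟩ ⟨hc, hf⟩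
    refine ⟨?_, ?_⟩
    · intro k
      simp only [Equiv.Perm.mul_apply, Function.comp_apply]
      by_cases hk : k = i
      · subst hk
        rw [Equiv.swap_apply_left]
        have hmem : f j ∈ A := by
          rw [← hf]; exact Multiset.mem_map.mpr ⟨j, Finset.mem_univ_val j, rfl⟩
        exact step_extend hG hij (hmiss _ hmem) (hc j)
      · by_cases hk' : k = j
        · subst hk'
          rw [Equiv.swap_apply_right]
          have hmem : f i ∈ A := by
            rw [← hf]; exact Multiset.mem_map.mpr ⟨i, Finset.mem_univ_val i, rfl⟩
          have hne' : s((f i).1, (f i).2) ≠ s(k, i) :=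
            fun h => hmiss _ hmem (h.trans Sym2.eq_swap)
          exact step_extend hG hij.symm hne' (hc i)
        · rw [Equiv.swap_apply_of_ne_of_ne hk hk']
          exact hc k
    · show flowOf (f ∘ Equiv.swap i j) = A
      rw [flowOf_comp]; exact hf
  have hinv : ∀ κ : Equiv.Perm (Fin n) × (Fin n → Fin n × Fin n),
      ((κ.1 * Equiv.swap i j) * Equiv.swap i j,
        (κ.2 ∘ Equiv.swap i j) ∘ Equiv.swap i j) = κ := by
    intro κ
    refine Prod.ext ?_ ?_
    · show (κ.1 * Equiv.swap i j) * Equiv.swap i j = κ.1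
      rw [mul_assoc, Equiv.swap_mul_self, mul_one]
    · funext x
      simp [Function.comp, Equiv.swap_apply_self]
  have hsign : ∀ κ : Equiv.Perm (Fin n) × (Fin n → Fin n × Fin n),
      Equiv.Perm.sign (κ.1 * Equiv.swap i j) = - Equiv.Perm.sign κ.1 := by
    intro κ
    rw [Equiv.Perm.sign_mul, Equiv.Perm.sign_swap hij.ne, mul_neg_one]
  have hnofix : ∀ κ ∈ classOf G A,
      (κ.1 * Equiv.swap i j, κ.2 ∘ Equiv.swap i j) ≠ κ := by
    intro κ _ heq
    have h1 : κ.1 * Equiv.swap i j = κ.1 := congrArg Prod.fst heq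
    have h2 : Equiv.swap i j = 1 := by
      have := h1.trans (mul_one κ.1).symm
      exact mul_left_cancel this
    have : Equiv.swap i j i = (1 : Equiv.Perm (Fin n)) i := by rw [h2]
    rw [Equiv.swap_apply_left] at this
    exact hij.ne this.symm
  refine ⟨hwd, hinv, hsign, hnofix, ?_⟩
  let e : {κ // κ ∈ classOf G A} ≃ {κ // κ ∈ classOf G A} :=
    { toFun := fun κ => ⟨(κ.1.1 * Equiv.swap i j, κ.1.2 ∘ Equiv.swap i j), hwd _ κ.2⟩
      invFun := fun κ => ⟨(κ.1.1 * Equiv.swap i j, κ.1.2 ∘ Equiv.swap i j), hwd _ κ.2⟩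
      left_inv := fun κ => Subtype.ext (hinv κ.1)
      right_inv := fun κ => Subtype.ext (hinv κ.1) }
  have hneg : ∀ κ : {κ // κ ∈ classOf G A},
      (Equiv.Perm.sign (e κ).1.1 : ℤ) = - (Equiv.Perm.sign κ.1.1 : ℤ) := by
    intro κ
    show ((Equiv.Perm.sign (κ.1.1 * Equiv.swap i j) : ℤˣ) : ℤ) = _
    rw [hsign κ.1]
    simp
  have h1 : ∑ κ : {κ // κ ∈ classOf G A}, (Equiv.Perm.sign (e κ).1.1 : ℤ)
      = ∑ κ : {κ // κ ∈ classOf G A}, (Equiv.Perm.sign κ.1.1 : ℤ) :=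
    Equiv.sum_comp e (fun κ => (Equiv.Perm.sign κ.1.1 : ℤ))
  have h2 : ∑ κ : {κ // κ ∈ classOf G A}, (Equiv.Perm.sign (e κ).1.1 : ℤ)
      = ∑ κ : {κ // κ ∈ classOf G A}, -(Equiv.Perm.sign κ.1.1 : ℤ) :=
    Finset.sum_congr rfl (fun κ _ => hneg κ)
  have h3 : ∑ κ : {κ // κ ∈ classOf G A}, -(Equiv.Perm.sign κ.1.1 : ℤ)
      = -∑ κ : {κ // κ ∈ classOf G A}, (Equiv.Perm.sign κ.1.1 : ℤ) :=
    Finset.sum_neg_distrib _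
  linarith [h1, h2, h3]
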